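/- arXiv:2502.15655 — 7 statements merged into one kernel-verified Lean document; each statement's English description precedes it below -/
import Mathlib

section
/- Let μ be a probability measure on ℝ with supp(μ) ⊆ [−M, M], and let K, ε > 0. For every z ∈ ℂ with |Re z| ≤ K, dist(Re z, supp(μ)) ≥ ε, and |Im z| ≤ ε³/(4(M+K)²), the derivative of the Stieltjes transform satisfies |S_μ′(z)| ≥ 1/(2(M+K)²). -/
open MeasureTheory Metric Complex

/-- The topological support of a measure: the set of points all of whose open
neighborhoods have nonzero measure. -/
def measSupport {α : Type*} [TopologicalSpace α] [MeasurableSpace α]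
    (μ : Measure α) : Set α :=
  {x | ∀ U : Set α, IsOpen U → x ∈ U → μ U ≠ 0}

/-- The Stieltjes transform of a measure on `ℝ`. -/
noncomputable def stieltjes (μ : Measure ℝ) (z : ℂ) : ℂ :=
  ∫ t, ((t : ℂ) - z)⁻¹ ∂μ

lemma null_compl_measSupport {α : Type*} [TopologicalSpace α]
    [SecondCountableTopology α] [MeasurableSpace α]
    (μ : Measure α) : μ (measSupport μ)ᶜ = 0 := by
  obtain ⟨T, hTc, hTsub, hTeq⟩ := TopologicalSpace.isOpen_sUnion_countable
    {U | IsOpen U ∧ μ U = 0} (fun s hs => hs.1)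
  have h0 : μ (⋃₀ T) = 0 := by
    rw [Set.sUnion_eq_biUnion]
    exact (measure_biUnion_null_iff hTc).2 fun U hU => (hTsub hU).2
  refine measure_mono_null ?_ h0
  intro x hx
  simp only [measSupport, Set.mem_compl_iff, Set.mem_setOf_eq, not_forall] at hx
  obtain ⟨U, hUo, hxU, hU0⟩ := hx
  rw [hTeq]
  exact ⟨U, ⟨hUo, not_not.1 hU0⟩, hxU⟩

lemma key_ineq (A s y ε : ℝ) (hε : 0 < ε) (hA : 0 < A) (hs1 : ε^2 ≤ s) (hs2 : s ≤ A)
    (hεA : ε^2 ≤ A) (hy : y^2 * (16*A^2) ≤ ε^6) :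
    1 * (s + y^2)^2 ≤ (s - y^2) * (2*A) := by
  have h4 : ε^4 ≤ A^2 := by nlinarith
  have h6 : ε^6 ≤ ε^2 * A^2 := by nlinarith [sq_nonneg ε, pow_pos hε 2]
  have hy2 : y^2 ≤ ε^2/16 := by nlinarith [mul_pos hA hA]
  nlinarith [sq_nonneg y, mul_nonneg (sub_nonneg.2 hs2) (le_trans (sq_nonneg ε) hs1),
    mul_pos hA hA, sq_nonneg (s - A), mul_le_mul_of_nonneg_left hy2 hA.le,
    mul_le_mul hy2 hy2 (sq_nonneg y) (by positivity : (0:ℝ) ≤ ε^2/16)]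

/-- If `μ` is a probability measure supported in `[-M, M]`, `|Re z| ≤ K`,
`dist(Re z, supp μ) ≥ ε` and `|Im z| ≤ ε³/(4(M+K)²)`, then
`|S_μ'(z)| ≥ 1/(2(M+K)²)`. -/
theorem deriv_stieltjes_lower_bound
    (μ : Measure ℝ) [IsProbabilityMeasure μ] (M K ε : ℝ)
    (hK : 0 < K) (hε : 0 < ε)
    (hsupp : measSupport μ ⊆ Set.Icc (-M) M)
    (z : ℂ) (hre : |z.re| ≤ K)
    (hdist : ε ≤ infDist z.re (measSupport μ))
    (him : |z.im| ≤ ε ^ 3 / (4 * (M + K) ^ 2)) :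
    1 / (2 * (M + K) ^ 2) ≤ ‖deriv (stieltjes μ) z‖ := by
  have hcompl := null_compl_measSupport μ
  have hae : ∀ᵐ t ∂μ, t ∈ measSupport μ := by
    rw [ae_iff]
    exact hcompl
  have hne : (measSupport μ).Nonempty := by
    by_contra h
    rw [Set.not_nonempty_iff_eq_empty] at h
    rw [h, Set.compl_empty] at hcompl
    simp [measure_univ] at hcompl
  obtain ⟨t₀, ht₀⟩ := hne
  have hM : 0 ≤ M := by
    have h1 := (hsupp ht₀).1
    have h2 := (hsupp ht₀).2
    linarith
  have hMK : 0 < M + K := by linarith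
  set A : ℝ := (M + K)^2 with hA_def
  have hA : 0 < A := by positivity
  have hεMK : ε ≤ M + K := by
    have h1 : infDist z.re (measSupport μ) ≤ dist z.re t₀ := infDist_le_dist_of_mem ht₀
    have habs : |t₀| ≤ M := abs_le.2 ⟨(hsupp ht₀).1, (hsupp ht₀).2⟩
    have h2 : dist z.re t₀ ≤ K + M := by
      rw [Real.dist_eq]
      calc |z.re - t₀| ≤ |z.re| + |t₀| := abs_sub _ _
        _ ≤ K + M := add_le_add hre habs
    linarith
  -- pointwise facts on the support
  have hpt : ∀ t ∈ measSupport μ, ε ≤ |t - z.re| ∧ |t - z.re| ≤ M + K := by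
    intro t ht
    constructor
    · have := infDist_le_dist_of_mem (x := z.re) ht
      rw [Real.dist_eq, abs_sub_comm] at this
      linarith
    · have habs : |t| ≤ M := abs_le.2 ⟨(hsupp ht).1, (hsupp ht).2⟩
      calc |t - z.re| ≤ |t| + |z.re| := abs_sub _ _
        _ ≤ M + K := add_le_add habs hre
  -- norm lower bound at z
  have hnz : ∀ t ∈ measSupport μ, ε ≤ ‖(t : ℂ) - z‖ := by
    intro t ht
    have h1 : |((t:ℂ) - z).re| ≤ ‖(t:ℂ) - z‖ := Complex.abs_re_le_norm _
    have h2 : ((t:ℂ) - z).re = t - z.re := by simp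
    calc ε ≤ |t - z.re| := (hpt t ht).1
      _ = |((t:ℂ) - z).re| := by rw [h2]
      _ ≤ _ := h1
  have hmeas : ∀ w : ℂ, AEStronglyMeasurable (fun t : ℝ => ((t:ℂ) - w)⁻¹) μ := by
    intro w
    exact ((Complex.measurable_ofReal.sub measurable_const).inv).aestronglyMeasurable
  have hmeas2 : AEStronglyMeasurable (fun t : ℝ => (((t:ℂ) - z)^2)⁻¹) μ := by
    exact (((Complex.measurable_ofReal.sub measurable_const).pow_const 2).inv).aestronglyMeasurable
  have hint : Integrable (fun t : ℝ => ((t:ℂ) - z)⁻¹) μ := by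
    refine Integrable.mono' (integrable_const ε⁻¹) (hmeas z) ?_
    filter_upwards [hae] with t ht
    rw [norm_inv]
    exact inv_anti₀ hε (hnz t ht)
  have hεhalf : 0 < ε/2 := by linarith
  have hbound : ∀ᵐ (t : ℝ) ∂μ, ∀ w ∈ ball z (ε/2),
      ‖(((t:ℂ) - w)^2)⁻¹‖ ≤ ((ε/2)^2)⁻¹ := by
    filter_upwards [hae] with t ht w hw
    have hd : ε/2 ≤ ‖(t:ℂ) - w‖ := by
      have h1 : dist ((t:ℂ)) z ≤ dist ((t:ℂ)) w + dist w z := dist_triangle _ _ _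
      have h2 : dist w z < ε/2 := mem_ball.1 hw
      have h3 : ε ≤ dist ((t:ℂ)) z := by rw [dist_eq_norm]; exact hnz t ht
      rw [← dist_eq_norm]
      linarith
    rw [norm_inv, norm_pow]
    exact inv_anti₀ (by positivity) (pow_le_pow_left₀ hεhalf.le hd 2)
  have hdiff : ∀ᵐ (t : ℝ) ∂μ, ∀ w ∈ ball z (ε/2),
      HasDerivAt (fun w => ((t:ℂ) - w)⁻¹) ((((t:ℂ) - w)^2)⁻¹) w := by
    filter_upwards [hae] with t ht w hw
    have hd : ε/2 ≤ ‖(t:ℂ) - w‖ := by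
      have h1 : dist ((t:ℂ)) z ≤ dist ((t:ℂ)) w + dist w z := dist_triangle _ _ _
      have h2 : dist w z < ε/2 := mem_ball.1 hw
      have h3 : ε ≤ dist ((t:ℂ)) z := by rw [dist_eq_norm]; exact hnz t ht
      rw [← dist_eq_norm]
      linarith
    have hne0 : (t:ℂ) - w ≠ 0 := by
      intro h
      rw [h, norm_zero] at hd
      linarith
    have h1 : HasDerivAt (fun w : ℂ => (t:ℂ) - w) (-1) w := (hasDerivAt_id w).const_sub _
    have h2 := h1.inv hne0
    simp at h2
    exact h2
  obtain ⟨hint2, hderiv⟩ := hasDerivAt_integral_of_dominated_loc_of_deriv_le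
    (F := fun w (t : ℝ) => ((t:ℂ) - w)⁻¹) (F' := fun w (t : ℝ) => (((t:ℂ) - w)^2)⁻¹)
    (bound := fun _ => ((ε/2)^2)⁻¹)
    (ball_mem_nhds z hεhalf) (Filter.Eventually.of_forall fun w => hmeas w) hint hmeas2 hbound
    (integrable_const _) hdiff
  have hder : deriv (stieltjes μ) z = ∫ t, (((t:ℂ) - z)^2)⁻¹ ∂μ := hderiv.deriv
  rw [hder]
  -- pointwise real-part lower bound
  have hptre : ∀ᵐ (t : ℝ) ∂μ, 1/(2*A) ≤ ((((t:ℂ) - z)^2)⁻¹).re := by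
    filter_upwards [hae] with t ht
    obtain ⟨h1, h2⟩ := hpt t ht
    have hq : (((t:ℂ) - z)^2).re = (t - z.re)^2 - z.im^2 := by
      simp [pow_two, Complex.mul_re]
    have hnsq : Complex.normSq (((t:ℂ) - z)^2) = ((t - z.re)^2 + z.im^2)^2 := by
      rw [map_pow]
      congr 1
      simp [Complex.normSq_apply]
      ring
    rw [Complex.inv_re, hq, hnsq]
    have hs1 : ε^2 ≤ (t - z.re)^2 := by
      calc ε^2 ≤ |t - z.re|^2 := pow_le_pow_left₀ hε.le h1 2
        _ = (t - z.re)^2 := _root_.sq_abs _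
    have hs2 : (t - z.re)^2 ≤ A := by
      calc (t - z.re)^2 = |t - z.re|^2 := (_root_.sq_abs _).symm
        _ ≤ (M+K)^2 := pow_le_pow_left₀ (abs_nonneg _) h2 2
    have hεA : ε^2 ≤ A := pow_le_pow_left₀ hε.le hεMK 2
    have hy : z.im^2 * (16*A^2) ≤ ε^6 := by
      have hy' : z.im^2 ≤ (ε^3/(4*A))^2 := by
        calc z.im^2 = |z.im|^2 := (_root_.sq_abs _).symm
          _ ≤ (ε^3/(4*A))^2 := pow_le_pow_left₀ (abs_nonneg _) him 2
      have heq : (ε^3/(4*A))^2 * (16*A^2) = ε^6 := by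
        field_simp
        ring
      calc z.im^2 * (16*A^2) ≤ (ε^3/(4*A))^2 * (16*A^2) := by nlinarith [mul_pos hA hA]
        _ = ε^6 := heq
    have hsum : 0 < (t - z.re)^2 + z.im^2 := by nlinarith [sq_nonneg z.im, pow_pos hε 2]
    have hdpos : 0 < ((t - z.re)^2 + z.im^2)^2 := pow_pos hsum 2
    rw [div_le_div_iff₀ (by linarith : (0:ℝ) < 2*A) hdpos]
    exact key_ineq A ((t - z.re)^2) z.im ε hε hA hs1 hs2 hεA hy
  have hre_int : Integrable (fun t : ℝ => ((((t:ℂ) - z)^2)⁻¹).re) μ := hint2.re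
  have hmono : 1/(2*A) ≤ ∫ t, ((((t:ℂ) - z)^2)⁻¹).re ∂μ := by
    have h := integral_mono_ae (integrable_const (1/(2*A))) hre_int hptre
    simpa [measure_univ] using h
  have hre_eq : ∫ t, ((((t:ℂ) - z)^2)⁻¹).re ∂μ = (∫ t, (((t:ℂ) - z)^2)⁻¹ ∂μ).re :=
    integral_re hint2
  calc 1/(2*(M+K)^2) = 1/(2*A) := by rw [hA_def]
    _ ≤ (∫ t, (((t:ℂ) - z)^2)⁻¹ ∂μ).re := hre_eq ▸ hmono
    _ ≤ |(∫ t, (((t:ℂ) - z)^2)⁻¹ ∂μ).re| := le_abs_self _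
    _ ≤ ‖∫ t, (((t:ℂ) - z)^2)⁻¹ ∂μ‖ := by
        exact Complex.abs_re_le_norm _
end

section
/- Let τ ∈ (0,1], K > 0, φ > 0, and let μ be a probability measure on ℝ with μ(ℝ \ [−1/τ, 1/τ]) = 0. Let z ∈ ℂ with |z| ≤ K and let s ∈ ℂ with s ≠ 0 be such that the function x ↦ x/(1 + s x) is μ-integrable and the self-consistent equation 1/s = −z + φ ∫ x/(1 + s x) dμ(x) holds. Then |s| ≥ τ/(2(1 + K + φ)). -/
open MeasureTheory Complex

/-- If `μ` is a probability measure supported in `[-1/τ, 1/τ]` with `τ ∈ (0,1]`,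
`|z| ≤ K`, and `s ≠ 0` satisfies the self-consistent equation
`1/s = -z + φ ∫ x/(1 + s x) dμ(x)`, then `|s| ≥ τ/(2(1 + K + φ))`. -/
theorem stieltjes_solution_lower_bound
    (μ : Measure ℝ) [IsProbabilityMeasure μ] (τ K φ : ℝ)
    (hτ0 : 0 < τ) (hτ1 : τ ≤ 1) (hK : 0 < K) (hφ : 0 < φ)
    (hsupp : μ (Set.Icc (-(1 / τ)) (1 / τ))ᶜ = 0)
    (z s : ℂ) (hz : ‖z‖ ≤ K) (hs : s ≠ 0)
    (hint : Integrable (fun x : ℝ => (x : ℂ) / (1 + s * x)) μ)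
    (heq : 1 / s = -z + (φ : ℂ) * ∫ x : ℝ, (x : ℂ) / (1 + s * x) ∂μ) :
    τ / (2 * (1 + K + φ)) ≤ ‖s‖ := by
  by_contra hlt
  push_neg at hlt
  have hKφ : (0:ℝ) < 1 + K + φ := by linarith
  have hs0 : 0 < ‖s‖ := norm_pos_iff.2 hs
  have hsτ : ‖s‖ < τ / 2 := by
    have : τ / (2 * (1 + K + φ)) ≤ τ / 2 := by
      apply div_le_div_of_nonneg_left hτ0.le (by norm_num)
      nlinarith
    linarith
  have hae : ∀ᵐ x ∂μ, x ∈ Set.Icc (-(1 / τ)) (1 / τ) := by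
    rw [ae_iff]
    exact hsupp
  have hbound : ∀ᵐ (x : ℝ) ∂μ, ‖(x : ℂ) / (1 + s * x)‖ ≤ 2 / τ := by
    filter_upwards [hae] with x hx
    have hx1 : |x| ≤ 1 / τ := abs_le.2 ⟨hx.1, hx.2⟩
    have hsx : ‖s * (x : ℂ)‖ < 1 / 2 := by
      rw [norm_mul, Complex.norm_real, Real.norm_eq_abs]
      calc ‖s‖ * |x| ≤ ‖s‖ * (1 / τ) :=
            mul_le_mul_of_nonneg_left hx1 hs0.le
        _ < (τ / 2) * (1 / τ) := by
            apply mul_lt_mul_of_pos_right hsτ (by positivity)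
        _ = 1 / 2 := by field_simp
    have hden : (1:ℝ) / 2 ≤ ‖1 + s * (x : ℂ)‖ := by
      have h1 : ‖(1:ℂ)‖ ≤ ‖1 + s * (x : ℂ)‖ + ‖s * (x : ℂ)‖ := by
        simpa using norm_add_le (1 + s * (x : ℂ)) (-(s * (x : ℂ)))
      simp only [norm_one] at h1
      linarith
    rw [norm_div, Complex.norm_real, Real.norm_eq_abs]
    calc |x| / ‖1 + s * (x : ℂ)‖ ≤ (1 / τ) / (1 / 2) :=
          div_le_div₀ (by positivity) hx1 (by norm_num) hden
      _ = 2 / τ := by field_simp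
  have hInorm : ‖∫ x : ℝ, (x : ℂ) / (1 + s * x) ∂μ‖ ≤ 2 / τ := by
    have := norm_integral_le_of_norm_le_const (μ := μ) hbound
    simpa using this
  have h1s : 1 / ‖s‖ ≤ K + φ * (2 / τ) := by
    have e1 : ‖(1:ℂ) / s‖ = 1 / ‖s‖ := by simp
    calc 1 / ‖s‖ = ‖(1:ℂ) / s‖ := e1.symm
      _ = ‖-z + (φ : ℂ) * ∫ x : ℝ, (x : ℂ) / (1 + s * x) ∂μ‖ := by rw [heq]
      _ ≤ ‖-z‖ + ‖(φ : ℂ) * ∫ x : ℝ, (x : ℂ) / (1 + s * x) ∂μ‖ := norm_add_le _ _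
      _ ≤ K + φ * (2 / τ) := by
          rw [norm_neg, norm_mul, Complex.norm_real, Real.norm_eq_abs,
            abs_of_pos hφ]
          gcongr
  rw [div_le_iff₀ hs0] at h1s
  have key : τ ≤ (K * τ + 2 * φ) * ‖s‖ := by
    have := mul_le_mul_of_nonneg_left h1s hτ0.le
    have hτne : τ ≠ 0 := hτ0.ne'
    field_simp at this
    nlinarith
  rw [lt_div_iff₀ (by positivity)] at hlt
  nlinarith [mul_nonneg hK.le hs0.le]
end

section
/- Let M be an n×n real symmetric positive semidefinite matrix, let D be an n×n real symmetric invertible matrix, and let z ∈ ℂ with Im z > 0. Suppose the complex matrix A := z⁻¹ M − D⁻¹ is invertible. Then for every w ∈ ℝⁿ, Im(wᵀ A⁻¹ w) ≥ 0. -/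
open Matrix Complex

/-- If `M` is real symmetric positive semidefinite, `D` is real symmetric invertible,
`Im z > 0`, and `A = z⁻¹ M - D⁻¹` (viewed as a complex matrix) is invertible, then
for every real vector `w`, `Im(wᵀ A⁻¹ w) ≥ 0`. -/
theorem im_quadratic_form_resolvent_nonneg
    {n : Type*} [Fintype n] [DecidableEq n]
    (M D : Matrix n n ℝ) (hM : M.PosSemidef) (hDsymm : D.IsSymm) (hD : IsUnit D)
    (z : ℂ) (hz : 0 < z.im)
    (A : Matrix n n ℂ)
    (hA : A = z⁻¹ • M.map (fun x : ℝ => (x : ℂ)) - (D⁻¹).map (fun x : ℝ => (x : ℂ)))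
    (hAinv : IsUnit A) :
    ∀ w : n → ℝ,
      0 ≤ (((fun i => (w i : ℂ)) ⬝ᵥ (A⁻¹ *ᵥ fun i => (w i : ℂ))) : ℂ).im := by
  intro w
  set MC : Matrix n n ℂ := M.map (fun x : ℝ => (x : ℂ)) with hMC
  set DC : Matrix n n ℂ := (D⁻¹).map (fun x : ℝ => (x : ℂ)) with hDC
  set cw : n → ℂ := fun i => (w i : ℂ) with hcw
  set v : n → ℂ := A⁻¹ *ᵥ cw with hv
  set t : ℂ := (starRingEnd ℂ) z⁻¹ - z⁻¹ with ht
  set s : ℂ := star v ⬝ᵥ (MC *ᵥ v) with hs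
  set q : ℂ := cw ⬝ᵥ v with hq
  -- hermitian facts
  have hMsymm : ∀ i j, M j i = M i j := fun i j => by
    have h := congrFun (congrFun hM.1 j) i
    simpa [Matrix.conjTranspose_apply] using h.symm
  have hMCH : MCᴴ = MC := by
    ext i j
    simp [hMC, Matrix.conjTranspose_apply, Matrix.map_apply, hMsymm i j]
  have hDinv : (D⁻¹)ᵀ = D⁻¹ := by
    rw [Matrix.transpose_nonsing_inv, hDsymm]
  have hDsymm' : ∀ i j, D⁻¹ j i = D⁻¹ i j := fun i j => congrFun (congrFun hDinv i) j
  have hDCH : DCᴴ = DC := by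
    ext i j
    simp only [hDC, Matrix.conjTranspose_apply, Matrix.map_apply, Complex.star_def,
      Complex.conj_ofReal]
    exact congrArg _ (hDsymm' i j)
  have hAH : Aᴴ - A = t • MC := by
    rw [hA, Matrix.conjTranspose_sub, Matrix.conjTranspose_smul, hMCH, hDCH]
    rw [sub_sub_sub_cancel_right, ← sub_smul]
    rfl
  -- w = A v
  have hdet : IsUnit A.det := (Matrix.isUnit_iff_isUnit_det A).mp hAinv
  have hwv : A *ᵥ v = cw := by
    rw [hv, Matrix.mulVec_mulVec, Matrix.mul_nonsing_inv A hdet, Matrix.one_mulVec]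
  have hcwstar : star cw = cw := by
    funext i; simp [hcw]
  -- q and its conjugate
  have hq1 : q = star v ⬝ᵥ (Aᴴ *ᵥ v) := by
    rw [hq, ← hcwstar, ← hwv, Matrix.star_mulVec, ← Matrix.dotProduct_mulVec]
  have hq2 : (starRingEnd ℂ) q = star v ⬝ᵥ (A *ᵥ v) := by
    have : (starRingEnd ℂ) q = star q := rfl
    rw [this, hq, ← Matrix.star_dotProduct_star, hcwstar]
    rw [← hwv]
  have hsub : q - (starRingEnd ℂ) q = t * s := by
    rw [hq2, hq1, ← dotProduct_sub, ← Matrix.sub_mulVec, hAH,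
      Matrix.smul_mulVec, dotProduct_smul, smul_eq_mul, ← hs]
  -- t facts
  have htre : t.re = 0 := by simp [ht]
  have htim : 0 ≤ t.im := by
    simp only [ht, Complex.sub_im, Complex.conj_im, Complex.inv_im, neg_div, neg_neg]
    have h0 : 0 ≤ Complex.normSq z := Complex.normSq_nonneg z
    have : 0 ≤ z.im / Complex.normSq z := div_nonneg hz.le h0
    linarith
  -- s.re ≥ 0
  set a : n → ℝ := fun i => (v i).re with ha
  set b : n → ℝ := fun i => (v i).im with hb
  have hsre : s.re = (a ⬝ᵥ (M *ᵥ a)) + (b ⬝ᵥ (M *ᵥ b)) := by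
    simp only [hs, dotProduct, Matrix.mulVec, Pi.star_apply, hMC, Matrix.map_apply,
      Complex.re_sum, ← Finset.sum_add_distrib, Finset.mul_sum]
    refine Finset.sum_congr rfl fun i _ => ?_
    refine Finset.sum_congr rfl fun j _ => ?_
    simp only [Complex.mul_re, Complex.mul_im, Complex.star_def, Complex.conj_re,
      Complex.conj_im, Complex.ofReal_re, Complex.ofReal_im, ha, hb]
    ring
  have hs0 : 0 ≤ s.re := by
    rw [hsre]
    have h1 := hM.dotProduct_mulVec_nonneg a
    have h2 := hM.dotProduct_mulVec_nonneg b
    simp only [star_trivial] at h1 h2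
    exact add_nonneg h1 h2
  -- conclude
  have him : 2 * q.im = t.im * s.re + t.re * s.im := by
    have := congrArg Complex.im hsub
    simp only [Complex.sub_im, Complex.conj_im, Complex.mul_im] at this
    linarith
  have : 2 * q.im = t.im * s.re := by rw [him, htre]; ring
  nlinarith [mul_nonneg htim hs0]
end

section
/- Let q ≥ 1, let I ⊆ ℝ, and let B : ℝ → (q×q real symmetric matrices) be a family such that for all z, z′ ∈ I with z < z′ the matrix B(z′) − B(z) is positive definite. Then the set {z ∈ I : det(B(z)) = 0} is finite and contains at most q elements. -/
open Matrix

section Aux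

variable {q : ℕ} {I : Set ℝ} {B : ℝ → Matrix (Fin q) (Fin q) ℝ}

private lemma ker_dot (hsymm : ∀ z, (B z).IsSymm) {z : ℝ} {v u : Fin q → ℝ}
    (hv : B z *ᵥ v = 0) : v ⬝ᵥ (B z *ᵥ u) = 0 := by
  rw [dotProduct_mulVec, ← Matrix.mulVec_transpose, (hsymm z).eq, hv, zero_dotProduct]

/-- Key positivity lemma: the quadratic form of `B (z j)` is positive on nonzero
linear combinations of kernel vectors at earlier points. -/
private lemma quad_pos (hsymm : ∀ z, (B z).IsSymm)
    (hmono : ∀ z ∈ I, ∀ z' ∈ I, z < z' → (B z' - B z).PosDef) :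
    ∀ (j : ℕ) (z : ℕ → ℝ) (v : ℕ → (Fin q → ℝ)),
      (∀ i, i ≤ j → z i ∈ I) → (∀ i i', i < i' → i' ≤ j → z i < z i') →
      (∀ i, i < j → B (z i) *ᵥ v i = 0) →
      ∀ a : ℕ → ℝ, (∑ i ∈ Finset.range j, a i • v i) ≠ 0 →
      0 < (∑ i ∈ Finset.range j, a i • v i) ⬝ᵥ
            (B (z j) *ᵥ (∑ i ∈ Finset.range j, a i • v i)) := by
  intro j
  induction j with
  | zero => intro z v _ _ _ a hw; simp at hw
  | succ j ih =>
    intro z v hzI hzlt hker a hw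
    set w : Fin q → ℝ := ∑ i ∈ Finset.range (j + 1), a i • v i with hwdef
    have hsplit : w ⬝ᵥ (B (z (j + 1)) *ᵥ w)
        = w ⬝ᵥ ((B (z (j + 1)) - B (z j)) *ᵥ w) + w ⬝ᵥ (B (z j) *ᵥ w) := by
      rw [Matrix.sub_mulVec, dotProduct_sub]; ring
    have hpos1 : 0 < w ⬝ᵥ ((B (z (j + 1)) - B (z j)) *ᵥ w) := by
      have hpd := hmono (z j) (hzI j (Nat.le_succ j)) (z (j + 1)) (hzI (j + 1) le_rfl)
        (hzlt j (j + 1) (Nat.lt_succ_self j) le_rfl)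
      simpa using hpd.dotProduct_mulVec_pos hw
    -- second term is nonnegative
    set u : Fin q → ℝ := ∑ i ∈ Finset.range j, a i • v i with hudef
    have hker_j : B (z j) *ᵥ v j = 0 := hker j (Nat.lt_succ_self j)
    have hwu : w = u + a j • v j := by
      rw [hwdef, hudef, Finset.sum_range_succ]
    have hBw : B (z j) *ᵥ w = B (z j) *ᵥ u := by
      rw [hwu, Matrix.mulVec_add, Matrix.mulVec_smul, hker_j, smul_zero, add_zero]
    have hQw : w ⬝ᵥ (B (z j) *ᵥ w) = u ⬝ᵥ (B (z j) *ᵥ u) := by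
      rw [hBw, hwu, add_dotProduct, smul_dotProduct,
        ker_dot hsymm hker_j, smul_zero, add_zero]
    have hnonneg : 0 ≤ w ⬝ᵥ (B (z j) *ᵥ w) := by
      rw [hQw]
      rcases eq_or_ne u 0 with h0 | h0
      · rw [h0]; simp
      · exact le_of_lt (ih z v (fun i hi => hzI i (hi.trans (Nat.le_succ j)))
          (fun i i' h hi' => hzlt i i' h (hi'.trans (Nat.le_succ j)))
          (fun i hi => hker i (hi.trans (Nat.lt_succ_self j))) a h0)
    rw [hsplit]
    linarith

/-- Kernel vectors at strictly increasing points are linearly independent. -/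
private lemma lin_indep (hsymm : ∀ z, (B z).IsSymm)
    (hmono : ∀ z ∈ I, ∀ z' ∈ I, z < z' → (B z' - B z).PosDef)
    (k : ℕ) (z : ℕ → ℝ) (v : ℕ → (Fin q → ℝ))
    (hzI : ∀ i, i < k → z i ∈ I)
    (hzlt : ∀ i i', i < i' → i' < k → z i < z i')
    (hker : ∀ i, i < k → B (z i) *ᵥ v i = 0)
    (hv0 : ∀ i, i < k → v i ≠ 0) :
    LinearIndependent ℝ (fun i : Fin k => v i) := by
  rw [Fintype.linearIndependent_iff]
  intro g hg
  by_contra hcon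
  push_neg at hcon
  obtain ⟨i0, hi0⟩ := hcon
  classical
  -- extend g to ℕ
  set a : ℕ → ℝ := fun i => if h : i < k then g ⟨i, h⟩ else 0 with ha
  have hane : {i ∈ Finset.range k | a i ≠ 0}.Nonempty := by
    refine ⟨i0, ?_⟩
    simp only [Finset.mem_filter, Finset.mem_range, ha]
    exact ⟨i0.2, by simpa [i0.2] using hi0⟩
  set j : ℕ := ({i ∈ Finset.range k | a i ≠ 0}).max' hane with hj
  have hjmem := Finset.max'_mem _ hane
  rw [← hj] at hjmem
  simp only [Finset.mem_filter, Finset.mem_range] at hjmem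
  obtain ⟨hjk, haj⟩ := hjmem
  have hsum : ∑ i ∈ Finset.range k, a i • v i = 0 := by
    rw [← hg]
    rw [Finset.sum_range fun i => a i • v i]
    congr 1
    ext i
    simp [ha, i.2]
  -- all terms beyond j vanish
  have hsum' : ∑ i ∈ Finset.range (j + 1), a i • v i = 0 := by
    have : ∑ i ∈ Finset.range k, a i • v i
        = ∑ i ∈ Finset.range (j + 1), a i • v i := by
      refine (Finset.sum_subset (Finset.range_subset_range.2 hjk) ?_).symm
      intro i hi hni
      simp only [Finset.mem_range] at hi hni
      have hia : a i = 0 := by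
        by_contra hne
        have := Finset.le_max' {i ∈ Finset.range k | a i ≠ 0} i
          (by simp [Finset.mem_filter, Finset.mem_range, hi, hne])
        omega
      simp [hia]
    rw [← this, hsum]
  set u : Fin q → ℝ := ∑ i ∈ Finset.range j, a i • v i with hu
  have huval : u = -(a j • v j) := by
    have h := hsum'
    rw [Finset.sum_range_succ, ← hu] at h
    exact eq_neg_of_add_eq_zero_left h
  have hune : u ≠ 0 := by
    rw [huval, neg_ne_zero]
    exact smul_ne_zero haj (hv0 j hjk)
  have hpos : 0 < u ⬝ᵥ (B (z j) *ᵥ u) :=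
    quad_pos hsymm hmono j z v (fun i hi => hzI i (lt_of_le_of_lt hi hjk))
      (fun i i' h hi' => hzlt i i' h (lt_of_le_of_lt hi' hjk))
      (fun i hi => hker i (hi.trans hjk)) a hune
  have hBu : B (z j) *ᵥ u = 0 := by
    rw [huval, Matrix.mulVec_neg, Matrix.mulVec_smul, hker j hjk, smul_zero, neg_zero]
  rw [hBu, dotProduct_zero] at hpos
  exact lt_irrefl 0 hpos

end Aux

/-- If `B : ℝ → (q×q real symmetric matrices)` is strictly increasing on a set `I` in the
positive definite order, then `det(B(z)) = 0` has at most `q` solutions `z ∈ I`. -/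
theorem det_zero_solutions_finite_of_strict_mono
    (q : ℕ) (hq : 1 ≤ q) (I : Set ℝ)
    (B : ℝ → Matrix (Fin q) (Fin q) ℝ)
    (hsymm : ∀ z, (B z).IsSymm)
    (hmono : ∀ z ∈ I, ∀ z' ∈ I, z < z' → (B z' - B z).PosDef) :
    {z ∈ I | (B z).det = 0}.Finite ∧ {z ∈ I | (B z).det = 0}.ncard ≤ q := by
  classical
  set S := {z ∈ I | (B z).det = 0} with hS
  -- every finset inside S has cardinality ≤ q
  have key : ∀ T : Finset ℝ, ↑T ⊆ S → T.card ≤ q := by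
    intro T hT
    set k := T.card with hk
    set e := T.orderIsoOfFin rfl with he
    set z : ℕ → ℝ := fun i => if h : i < k then (e ⟨i, h⟩ : ℝ) else 0 with hz
    have hzS : ∀ i, i < k → z i ∈ S := by
      intro i hi
      have : (e ⟨i, hi⟩ : ℝ) ∈ T := (e ⟨i, hi⟩).2
      have := hT this
      simpa [hz, hi] using this
    have hex : ∀ i : Fin k, ∃ w : Fin q → ℝ, w ≠ 0 ∧ B (z i) *ᵥ w = 0 := by
      intro i
      have hdet : (B (z i)).det = 0 := (hzS i i.2).2
      obtain ⟨w, hw0, hw⟩ := (Matrix.exists_mulVec_eq_zero_iff).2 hdet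
      exact ⟨w, hw0, hw⟩
    choose w hw0 hw using hex
    set v : ℕ → (Fin q → ℝ) := fun i => if h : i < k then w ⟨i, h⟩ else 0 with hv
    have hli : LinearIndependent ℝ (fun i : Fin k => v i) := by
      refine lin_indep hsymm hmono k z v (fun i hi => (hzS i hi).1) ?_
        (fun i hi => by simpa [hv, hi] using hw ⟨i, hi⟩)
        (fun i hi => by simpa [hv, hi] using hw0 ⟨i, hi⟩)
      intro i i' hii' hi'
      have hik : i < k := hii'.trans hi'
      have : e ⟨i, hik⟩ < e ⟨i', hi'⟩ := e.strictMono (by exact hii')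
      simpa [hz, hik, hi'] using (Subtype.coe_lt_coe.2 this)
    have := hli.fintype_card_le_finrank
    simpa [Module.finrank_fin_fun] using this
  have hfin : S.Finite := by
    by_contra hinf
    obtain ⟨T, hTS, hTcard⟩ := Set.Infinite.exists_subset_card_eq hinf (q + 1)
    have := key T hTS
    omega
  refine ⟨hfin, ?_⟩
  have : S.ncard = hfin.toFinset.card := (Set.ncard_eq_toFinset_card S hfin)
  rw [this]
  exact key _ (by simp)
end

section
/- Let C ≥ 1 and k ≥ 1 and let a, b, c, d, z be real numbers. Let F be the (C+k)×(C+k) real symmetric block matrix whose top-left C×C block is c·J_C + d·I_C (J_C the all-ones matrix), whose top-right C×k and bottom-left k×C blocks have all entries equal to b, and whose bottom-right k×k block is a·I_k. Then det(zI_{C+k} − F) = (z − d)^{C−1} (z − a)^{k−1} ( (z − d − Cc)(z − a) − C k b² ). -/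
open Matrix

lemma det_smul_one_add_smul_ones (n : ℕ) (hn : 1 ≤ n) (α β : ℝ) (hα : α ≠ 0) :
    (α • (1 : Matrix (Fin n) (Fin n) ℝ) + β • Matrix.of (fun _ _ => (1 : ℝ))).det
      = α ^ (n - 1) * (α + (n : ℝ) * β) := by
  have h : α • (1 : Matrix (Fin n) (Fin n) ℝ) + β • Matrix.of (fun _ _ => (1 : ℝ))
      = α • (1 + Matrix.replicateCol Unit (fun _ => (1 : ℝ)) * Matrix.replicateRow Unit (fun _ => β / α)) := by
    ext i j
    by_cases hij : i = j <;>
      simp [hij, Matrix.mul_apply, Matrix.one_apply, mul_add, mul_div_cancel₀ _ hα]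
  rw [h, Matrix.det_smul, Matrix.det_one_add_replicateCol_mul_replicateRow]
  have hd : (fun _ : Fin n => β / α) ⬝ᵥ (fun _ => (1 : ℝ)) = (n : ℝ) * (β / α) := by
    simp [dotProduct, Finset.sum_const, mul_one]
  rw [hd]
  have hpow : α ^ Fintype.card (Fin n) = α ^ (n - 1) * α := by
    rw [Fintype.card_fin, ← pow_succ, Nat.sub_add_cancel hn]
  rw [hpow]
  field_simp

/-- Determinant of the block matrix with top-left block `cJ + dI`, off-diagonal blocks
all equal to `b`, and bottom-right block `aI`:
`det(zI - F) = (z-d)^{C-1} (z-a)^{k-1} ((z-d-Cc)(z-a) - Ckb²)`. -/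
theorem det_two_block_ones_matrix
    (C k : ℕ) (hC : 1 ≤ C) (hk : 1 ≤ k) (a b c d z : ℝ)
    (F : Matrix (Fin C ⊕ Fin k) (Fin C ⊕ Fin k) ℝ)
    (hF : F = Matrix.fromBlocks
      (c • Matrix.of (fun _ _ => (1 : ℝ)) + d • (1 : Matrix (Fin C) (Fin C) ℝ))
      (b • Matrix.of (fun _ _ => (1 : ℝ)))
      (b • Matrix.of (fun _ _ => (1 : ℝ)))
      (a • (1 : Matrix (Fin k) (Fin k) ℝ))) :
    (z • (1 : Matrix (Fin C ⊕ Fin k) (Fin C ⊕ Fin k) ℝ) - F).det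
      = (z - d) ^ (C - 1) * (z - a) ^ (k - 1)
        * ((z - d - (C : ℝ) * c) * (z - a) - (C : ℝ) * (k : ℝ) * b ^ 2) := by
  have main : ∀ w : ℝ,
      (fun w : ℝ => (w • (1 : Matrix (Fin C ⊕ Fin k) (Fin C ⊕ Fin k) ℝ) - F).det) w
      = (fun w : ℝ => (w - d) ^ (C - 1) * (w - a) ^ (k - 1)
        * ((w - d - (C : ℝ) * c) * (w - a) - (C : ℝ) * (k : ℝ) * b ^ 2)) w := by
    rw [← funext_iff]
    -- key computation away from `a` and `d`
    have key : ∀ w : ℝ, w ≠ a → w ≠ d →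
        (w • (1 : Matrix (Fin C ⊕ Fin k) (Fin C ⊕ Fin k) ℝ) - F).det
        = (w - d) ^ (C - 1) * (w - a) ^ (k - 1)
          * ((w - d - (C : ℝ) * c) * (w - a) - (C : ℝ) * (k : ℝ) * b ^ 2) := by
      intro w hwa hwd
      have hza : w - a ≠ 0 := sub_ne_zero.mpr hwa
      have hzd : w - d ≠ 0 := sub_ne_zero.mpr hwd
      have hblock : w • (1 : Matrix (Fin C ⊕ Fin k) (Fin C ⊕ Fin k) ℝ) - F
          = Matrix.fromBlocks
            ((w - d) • (1 : Matrix (Fin C) (Fin C) ℝ) + (-c) • Matrix.of (fun _ _ => (1 : ℝ)))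
            ((-b) • (Matrix.of (fun _ _ => (1 : ℝ)) : Matrix (Fin C) (Fin k) ℝ))
            ((-b) • (Matrix.of (fun _ _ => (1 : ℝ)) : Matrix (Fin k) (Fin C) ℝ))
            ((w - a) • (1 : Matrix (Fin k) (Fin k) ℝ)) := by
        subst hF
        ext i j
        cases i <;> cases j <;>
          simp [Matrix.one_apply, sub_smul] <;>
          try (split <;> ring)
      letI : Invertible ((w - a) • (1 : Matrix (Fin k) (Fin k) ℝ)) :=
        ⟨(w - a)⁻¹ • (1 : Matrix (Fin k) (Fin k) ℝ),
          by rw [Matrix.smul_mul, Matrix.one_mul, smul_smul, inv_mul_cancel₀ hza, one_smul],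
          by rw [Matrix.smul_mul, Matrix.one_mul, smul_smul, mul_inv_cancel₀ hza, one_smul]⟩
      have hinvOf : ⅟((w - a) • (1 : Matrix (Fin k) (Fin k) ℝ))
          = (w - a)⁻¹ • (1 : Matrix (Fin k) (Fin k) ℝ) := rfl
      rw [hblock, Matrix.det_fromBlocks₂₂, hinvOf]
      have hschur : ((w - d) • (1 : Matrix (Fin C) (Fin C) ℝ)
            + (-c) • Matrix.of (fun _ _ => (1 : ℝ)))
          - ((-b) • (Matrix.of (fun _ _ => (1 : ℝ)) : Matrix (Fin C) (Fin k) ℝ))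
            * ((w - a)⁻¹ • (1 : Matrix (Fin k) (Fin k) ℝ))
            * ((-b) • (Matrix.of (fun _ _ => (1 : ℝ)) : Matrix (Fin k) (Fin C) ℝ))
          = (w - d) • (1 : Matrix (Fin C) (Fin C) ℝ)
            + (-(c + (k : ℝ) * b ^ 2 / (w - a))) • Matrix.of (fun _ _ => (1 : ℝ)) := by
        ext i j
        by_cases hij : i = j <;>
          simp [hij, Matrix.mul_apply, Matrix.one_apply, Finset.mul_sum] <;>
          field_simp <;> ring
      rw [hschur, det_smul_one_add_smul_ones C hC _ _ hzd, Matrix.det_smul, Matrix.det_one,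
        Fintype.card_fin]
      have hka : (w - a) ^ k = (w - a) ^ (k - 1) * (w - a) := by
        rw [← pow_succ, Nat.sub_add_cancel hk]
      rw [mul_one, hka]
      field_simp
      ring
    -- extend by continuity
    have hdense : Dense ({a}ᶜ ∩ {d}ᶜ : Set ℝ) :=
      (dense_compl_singleton a).inter_of_isOpen_left (dense_compl_singleton d)
        isOpen_compl_singleton
    have hfc : Continuous fun w : ℝ =>
        (w • (1 : Matrix (Fin C ⊕ Fin k) (Fin C ⊕ Fin k) ℝ) - F).det := by
      apply Continuous.matrix_det
      exact (continuous_id.smul continuous_const).sub continuous_const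
    have hgc : Continuous fun w : ℝ => (w - d) ^ (C - 1) * (w - a) ^ (k - 1)
        * ((w - d - (C : ℝ) * c) * (w - a) - (C : ℝ) * (k : ℝ) * b ^ 2) := by
      apply Continuous.mul
      · exact ((continuous_id.sub continuous_const).pow _).mul
          ((continuous_id.sub continuous_const).pow _)
      · exact (((continuous_id.sub continuous_const).sub continuous_const).mul
          (continuous_id.sub continuous_const)).sub continuous_const
    exact hfc.ext_on hdense hgc (fun w hw => key w hw.1 hw.2)
  exact main z
end

section
/- Let q ≥ 1, let h : ℝ^q → ℝ be uniformly continuous, let γ be the standard Gaussian measure on ℝ^q (the q-fold product of the standard Gaussian on ℝ), and let (g_ℓ)_{ℓ≥1} be i.i.d. random vectors with law γ. Let T, T₁, T₂, … be linear maps ℝ^q → ℝ^q and v, v₁, v₂, … ∈ ℝ^q with √(log n)·(‖Tₙ − T‖ + ‖vₙ − v‖) → 0 as n → ∞. Let ρ be the pushforward of γ under x ↦ h(Tx + v). Then almost surely, max_{ℓ ≤ n} dist( h(Tₙ g_ℓ + vₙ), supp(ρ) ) → 0 as n → ∞. -/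
open MeasureTheory ProbabilityTheory Filter Metric

section Aux

lemma integrable_xexp : MeasureTheory.Integrable (fun x : ℝ => x * Real.exp (-x^2/2)) := by
  have h := integrable_mul_exp_neg_mul_sq (b := (1:ℝ)/2) (by norm_num)
  convert h using 2 with x
  ring_nf

lemma integrable_absxexp : MeasureTheory.Integrable (fun x : ℝ => |x| * Real.exp (-x^2/2)) := by
  have h := integrable_xexp.abs
  refine h.congr (Filter.Eventually.of_forall fun x => ?_)
  simp only [abs_mul, abs_of_pos (Real.exp_pos _)]

lemma integral_Ioi_xexp (t : ℝ) :
    ∫ x in Set.Ioi t, x * Real.exp (-x^2/2) = Real.exp (-t^2/2) := by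
  have hderiv : ∀ x ∈ Set.Ici t,
      HasDerivAt (fun y : ℝ => -Real.exp (-y^2/2)) (x * Real.exp (-x^2/2)) x := by
    intro x _
    have h1 : HasDerivAt (fun y : ℝ => -y^2/2) (-x) x := by
      have h0 := ((hasDerivAt_pow 2 x).neg).div_const 2
      refine h0.congr_deriv ?_
      norm_num
      ring
    have h2 := (h1.exp).neg
    refine h2.congr_deriv ?_
    ring
  have hint : MeasureTheory.IntegrableOn (fun x : ℝ => x * Real.exp (-x^2/2)) (Set.Ioi t) :=
    integrable_xexp.integrableOn
  have htend : Tendsto (fun y : ℝ => -Real.exp (-y^2/2)) atTop (nhds 0) := by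
    rw [show (0:ℝ) = -0 by ring]
    apply Tendsto.neg
    apply Real.tendsto_exp_atBot.comp
    have h3 : Tendsto (fun y : ℝ => y^2/2) atTop atTop :=
      (tendsto_pow_atTop (two_ne_zero)).atTop_div_const (by norm_num)
    simpa [neg_div] using tendsto_neg_atBot_iff.mpr h3
  have := MeasureTheory.integral_Ioi_of_hasDerivAt_of_tendsto' hderiv hint htend
  simpa using this

lemma integral_Ioi_absxexp (t : ℝ) (ht : 0 ≤ t) :
    ∫ x in Set.Ioi t, |x| * Real.exp (-x^2/2) = Real.exp (-t^2/2) := by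
  rw [← integral_Ioi_xexp t]
  refine setIntegral_congr_fun measurableSet_Ioi fun x hx => ?_
  rw [abs_of_pos (lt_of_le_of_lt ht hx)]

lemma gauss1_tail {t : ℝ} (ht : 1 ≤ t) :
    gaussianReal 0 1 {x : ℝ | t < |x|} ≤ ENNReal.ofReal (2 * Real.exp (-t^2/2)) := by
  rw [gaussianReal_apply_eq_integral 0 one_ne_zero]
  refine ENNReal.ofReal_le_ofReal ?_
  have hset : {x : ℝ | t < |x|} = Set.Iio (-t) ∪ Set.Ioi t := by
    ext x
    simp only [Set.mem_setOf_eq, Set.mem_union, Set.mem_Iio, Set.mem_Ioi, lt_abs, lt_neg,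
      or_comm]
  have hpdf_le : ∀ x ∈ {x : ℝ | t < |x|},
      ProbabilityTheory.gaussianPDFReal 0 1 x ≤ |x| * Real.exp (-x^2/2) := by
    intro x hx
    have hx1 : (1:ℝ) ≤ |x| := le_trans ht (le_of_lt hx)
    rw [ProbabilityTheory.gaussianPDFReal]
    have h2π : (1:ℝ) ≤ Real.sqrt (2 * Real.pi * (1:NNReal)) := by
      rw [show ((1:NNReal):ℝ) = 1 by norm_num, mul_one]
      rw [show (1:ℝ) = Real.sqrt 1 by simp]
      exact Real.sqrt_le_sqrt (by nlinarith [Real.pi_gt_three])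
    have hinv : (Real.sqrt (2 * Real.pi * (1:NNReal)))⁻¹ ≤ 1 := by
      apply inv_le_one_of_one_le₀ h2π
    have harg : -(x - 0)^2 / (2 * ((1:NNReal):ℝ)) = -x^2/2 := by
      norm_num
    rw [harg]
    calc (Real.sqrt (2 * Real.pi * (1:NNReal)))⁻¹ * Real.exp (-x^2/2)
        ≤ 1 * Real.exp (-x^2/2) := by
          apply mul_le_mul_of_nonneg_right hinv (Real.exp_pos _).le
      _ ≤ |x| * Real.exp (-x^2/2) := by
          apply mul_le_mul_of_nonneg_right hx1 (Real.exp_pos _).le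
  have hmeas : MeasurableSet {x : ℝ | t < |x|} := by
    rw [hset]; exact measurableSet_Iio.union measurableSet_Ioi
  have step1 : ∫ x in {x : ℝ | t < |x|}, ProbabilityTheory.gaussianPDFReal 0 1 x
      ≤ ∫ x in {x : ℝ | t < |x|}, |x| * Real.exp (-x^2/2) := by
    refine setIntegral_mono_on ?_ ?_ hmeas hpdf_le
    · exact (ProbabilityTheory.integrable_gaussianPDFReal 0 1).integrableOn
    · exact integrable_absxexp.integrableOn
  refine le_trans step1 ?_
  rw [hset]
  have hdisj : Disjoint (Set.Iio (-t)) (Set.Ioi t) := by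
    exact (Set.Iio_disjoint_Ici le_rfl).mono_right (Set.Ioi_subset_Ici (by linarith))
  rw [setIntegral_union hdisj measurableSet_Ioi integrable_absxexp.integrableOn
    integrable_absxexp.integrableOn]
  have hIio : ∫ x in Set.Iio (-t), |x| * Real.exp (-x^2/2) = Real.exp (-t^2/2) := by
    rw [← integral_Iic_eq_integral_Iio]
    have heven : ∀ x : ℝ, |(-x)| * Real.exp (-(-x)^2/2) = |x| * Real.exp (-x^2/2) := by
      intro x; rw [abs_neg, neg_sq]
    have := integral_comp_neg_Iic (-t) (fun x => |x| * Real.exp (-x^2/2))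
    rw [neg_neg] at this
    simp_rw [heven] at this
    rw [this, integral_Ioi_absxexp t (by linarith)]
  rw [hIio, integral_Ioi_absxexp t (by linarith)]
  ring_nf
  exact le_refl _

lemma coord_measure (q : ℕ) (i : Fin q) {t : ℝ} :
    Measure.pi (fun _ : Fin q => gaussianReal 0 1) {x : Fin q → ℝ | t < |x i|}
      = gaussianReal 0 1 {y : ℝ | t < |y|} := by
  have hmeas1 : MeasurableSet {y : ℝ | t < |y|} :=
    measurableSet_lt measurable_const measurable_abs
  have hmeasq : MeasurableSet {x : Fin q → ℝ | t < |x i|} :=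
    measurableSet_lt measurable_const ((measurable_pi_apply i).abs)
  have hcompl : {x : Fin q → ℝ | t < |x i|}ᶜ
      = Set.pi Set.univ (fun j => if j = i then {y : ℝ | t < |y|}ᶜ else Set.univ) := by
    ext x
    simp only [Set.mem_compl_iff, Set.mem_setOf_eq, Set.mem_univ_pi]
    constructor
    · intro hx j
      by_cases hj : j = i
      · subst hj; simp [hx]
      · simp [hj]
    · intro hx
      have := hx i
      simpa using this
  have h1 : Measure.pi (fun _ : Fin q => gaussianReal 0 1) {x : Fin q → ℝ | t < |x i|}ᶜ
      = gaussianReal 0 1 {y : ℝ | t < |y|}ᶜ := by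
    rw [hcompl, Measure.pi_pi]
    rw [Finset.prod_eq_single i (fun j _ hj => by simp [hj]) (by simp)]
    simp
  have h3 := prob_compl_eq_one_sub (μ := gaussianReal 0 1) hmeas1
  have h4 : Measure.pi (fun _ : Fin q => gaussianReal 0 1) {x : Fin q → ℝ | t < |x i|}
      = 1 - Measure.pi (fun _ : Fin q => gaussianReal 0 1) {x : Fin q → ℝ | t < |x i|}ᶜ := by
    rw [prob_compl_eq_one_sub (μ := Measure.pi (fun _ : Fin q => gaussianReal 0 1)) hmeasq,
      ENNReal.sub_sub_cancel (by norm_num) (prob_le_one)]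
  rw [h4, h1, h3, ENNReal.sub_sub_cancel (by norm_num) (prob_le_one)]

lemma pi_gauss_tail (q : ℕ) {t : ℝ} (ht : 0 ≤ t)
    (hb : gaussianReal 0 1 {y : ℝ | t < |y|} ≤ ENNReal.ofReal (2 * Real.exp (-t^2/2))) :
    Measure.pi (fun _ : Fin q => gaussianReal 0 1) {x : Fin q → ℝ | t < ‖x‖}
      ≤ q * ENNReal.ofReal (2 * Real.exp (-t^2/2)) := by
  have hsub : {x : Fin q → ℝ | t < ‖x‖} ⊆ ⋃ i, {x : Fin q → ℝ | t < |x i|} := by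
    intro x hx
    by_contra hcon
    simp only [Set.mem_iUnion, Set.mem_setOf_eq, not_exists, not_lt] at hcon
    have : ‖x‖ ≤ t := by
      rw [pi_norm_le_iff_of_nonneg ht]
      intro i
      simpa [Real.norm_eq_abs] using hcon i
    exact absurd hx (by simpa using not_lt.mpr this)
  calc Measure.pi (fun _ : Fin q => gaussianReal 0 1) {x : Fin q → ℝ | t < ‖x‖}
      ≤ Measure.pi (fun _ : Fin q => gaussianReal 0 1) (⋃ i, {x : Fin q → ℝ | t < |x i|}) :=
        measure_mono hsub
    _ ≤ ∑ i : Fin q, Measure.pi (fun _ : Fin q => gaussianReal 0 1) {x : Fin q → ℝ | t < |x i|} :=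
        measure_iUnion_fintype_le _ _
    _ = ∑ _i : Fin q, gaussianReal 0 1 {y : ℝ | t < |y|} := by
        refine Finset.sum_congr rfl fun i _ => coord_measure q i
    _ ≤ ∑ _i : Fin q, ENNReal.ofReal (2 * Real.exp (-t^2/2)) :=
        Finset.sum_le_sum fun i _ => hb
    _ = q * ENNReal.ofReal (2 * Real.exp (-t^2/2)) := by
        simp [Finset.sum_const, nsmul_eq_mul]

set_option maxHeartbeats 1000000 in
lemma ae_norm_event (q : ℕ) {Ω : Type*} [MeasurableSpace Ω] (P : Measure Ω)
    [IsProbabilityMeasure P]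
    (g : ℕ → Ω → (Fin q → ℝ)) (hgmeas : ∀ ℓ, Measurable (g ℓ))
    (hlaw : ∀ ℓ, Measure.map (g ℓ) P = Measure.pi (fun _ : Fin q => gaussianReal 0 1)) :
    ∀ᵐ ω ∂P, ∀ᶠ ℓ : ℕ in atTop, ‖g ℓ ω‖ ≤ 2 * Real.sqrt (Real.log ℓ) := by
  set s : ℕ → Set Ω := fun ℓ => {ω | 2 * Real.sqrt (Real.log ℓ) < ‖g ℓ ω‖} with hs
  have key : ∀ ℓ : ℕ, 2 ≤ ℓ →
      P (s ℓ) ≤ (q : ENNReal) * ENNReal.ofReal (2 * ((ℓ:ℝ)^2)⁻¹) := by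
    intro ℓ hℓ
    set t : ℝ := 2 * Real.sqrt (Real.log ℓ) with htdef
    have hℓpos : (0:ℝ) < ℓ := by exact_mod_cast Nat.lt_of_lt_of_le (by norm_num) hℓ
    have hlogpos : (0:ℝ) ≤ Real.log ℓ := Real.log_natCast_nonneg ℓ
    have hlog2 : Real.log 2 ≤ Real.log ℓ := by
      apply Real.log_le_log (by norm_num)
      exact_mod_cast hℓ
    have ht1 : (1:ℝ) ≤ t := by
      have h2 : (1/4 : ℝ) ≤ Real.log 2 := by
        nlinarith [Real.log_two_gt_d9]
      have : Real.sqrt (1/4) ≤ Real.sqrt (Real.log ℓ) :=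
        Real.sqrt_le_sqrt (by linarith)
      have h4 : Real.sqrt (1/4 : ℝ) = 1/2 := by
        rw [show (1/4 : ℝ) = (1/2)^2 by norm_num, Real.sqrt_sq (by norm_num)]
      rw [htdef]
      nlinarith
    have hmeasx : MeasurableSet {x : Fin q → ℝ | t < ‖x‖} :=
      measurableSet_lt measurable_const (continuous_norm.measurable)
    have hmap : P (s ℓ) = Measure.pi (fun _ : Fin q => gaussianReal 0 1)
        {x : Fin q → ℝ | t < ‖x‖} := by
      rw [← hlaw ℓ, Measure.map_apply (hgmeas ℓ) hmeasx]
      rfl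
    have hexp : Real.exp (-t^2/2) = ((ℓ:ℝ)^2)⁻¹ := by
      have hsq : t^2 = 4 * Real.log ℓ := by
        rw [htdef, mul_pow, Real.sq_sqrt hlogpos]; ring
      rw [hsq, show -(4 * Real.log ℓ)/2 = -(Real.log ℓ + Real.log ℓ) by ring,
        Real.exp_neg, Real.exp_add, Real.exp_log hℓpos]
      rw [sq]
    rw [hmap, ← hexp]
    exact pi_gauss_tail q (by linarith) (gauss1_tail ht1)
  -- summability
  set c : ℕ → ℝ := fun ℓ => if ℓ < 2 then 1 else (q:ℝ) * (2 * ((ℓ:ℝ)^2)⁻¹) with hc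
  have hc_nonneg : ∀ ℓ, 0 ≤ c ℓ := by
    intro ℓ
    by_cases hℓ : ℓ < 2
    · simp [hc, hℓ, show ℓ ≤ 1 by omega]
    · simp only [hc, hℓ, if_false]
      positivity
  have hcsum : Summable c := by
    rw [← summable_nat_add_iff 2]
    have h1 : Summable (fun n : ℕ => 1 / (n:ℝ)^2) :=
      Real.summable_one_div_nat_pow.mpr (by norm_num)
    have h2 : Summable (fun n : ℕ => 1 / ((n+2:ℕ):ℝ)^2) :=
      (summable_nat_add_iff 2).mpr h1
    have h3 := h2.mul_left ((q:ℝ) * 2)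
    refine h3.congr fun n => ?_
    rw [hc]
    simp only [show ¬ (n + 2 < 2) from by omega, if_false]
    push_cast
    ring
  have hsum : (∑' ℓ, P (s ℓ)) ≠ ⊤ := by
    have hle : ∀ ℓ, P (s ℓ) ≤ ENNReal.ofReal (c ℓ) := by
      intro ℓ
      by_cases hℓ : ℓ < 2
      · rw [hc]
        simp only [hℓ, if_true, ENNReal.ofReal_one]
        exact prob_le_one
      · rw [hc]
        simp only [hℓ, if_false]
        refine le_trans (key ℓ (by omega)) (le_of_eq ?_)
        rw [ENNReal.ofReal_mul (by positivity : (0:ℝ) ≤ (q:ℝ)), ENNReal.ofReal_natCast]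
    refine ne_top_of_le_ne_top ?_ (ENNReal.tsum_le_tsum hle)
    rw [← ENNReal.ofReal_tsum_of_nonneg hc_nonneg hcsum]
    exact ENNReal.ofReal_ne_top
  filter_upwards [MeasureTheory.ae_eventually_notMem hsum] with ω hω
  filter_upwards [hω] with ℓ hℓ
  have : ¬ (2 * Real.sqrt (Real.log ℓ) < ‖g ℓ ω‖) := hℓ
  linarith [not_lt.mp this]

end Aux

/-- Strong convergence lemma: if `h` is uniformly continuous, `(g_ℓ)` are i.i.d. standard
Gaussian vectors in `ℝ^q`, and `√(log n)(‖Tₙ - T‖ + ‖vₙ - v‖) → 0`, then almost surely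
`max_{ℓ ≤ n} dist(h(Tₙ g_ℓ + vₙ), supp ρ) → 0`, where `ρ` is the law of `h(T g + v)`. -/
theorem strong_convergence_of_uniformContinuous
    (q : ℕ) (h : (Fin q → ℝ) → ℝ) (hh : UniformContinuous h)
    {Ω : Type*} [MeasurableSpace Ω] (P : Measure Ω) [IsProbabilityMeasure P]
    (g : ℕ → Ω → (Fin q → ℝ))
    (hgmeas : ∀ ℓ, Measurable (g ℓ))
    (hindep : iIndepFun g P)
    (hlaw : ∀ ℓ, Measure.map (g ℓ) P
      = Measure.pi (fun _ : Fin q => gaussianReal 0 1))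
    (T : ℕ → (Fin q → ℝ) →L[ℝ] (Fin q → ℝ)) (Tlim : (Fin q → ℝ) →L[ℝ] (Fin q → ℝ))
    (v : ℕ → (Fin q → ℝ)) (vlim : Fin q → ℝ)
    (hconv : Tendsto
      (fun n : ℕ => Real.sqrt (Real.log n) * (‖T n - Tlim‖ + ‖v n - vlim‖))
      atTop (nhds 0))
    (ρ : Measure ℝ)
    (hρ : ρ = Measure.map (fun x => h (Tlim x + vlim))
      (Measure.pi (fun _ : Fin q => gaussianReal 0 1))) :
    ∀ᵐ ω ∂P, Tendsto
      (fun n : ℕ => Finset.sup' (Finset.range (n + 1)) Finset.nonempty_range_add_one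
        (fun ℓ => infDist (h (T n (g ℓ ω) + v n)) (measSupport ρ)))
      atTop (nhds 0) := by
  have hSmem : ∀ x : Fin q → ℝ, h (Tlim x + vlim) ∈ measSupport ρ := by
    intro x U hU hxU
    haveI : (gaussianReal 0 1).IsOpenPosMeasure :=
      (gaussianReal_absolutelyContinuous' 0 one_ne_zero).isOpenPosMeasure
    have hf : Continuous fun y : Fin q → ℝ => h (Tlim y + vlim) :=
      hh.continuous.comp (Tlim.continuous.add continuous_const)
    rw [hρ, Measure.map_apply hf.measurable hU.measurableSet]
    exact (hU.preimage hf).measure_ne_zero _ ⟨x, hxU⟩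
  -- a.s. bound on norms
  filter_upwards [ae_norm_event q P g hgmeas hlaw] with ω hω
  obtain ⟨N, hN⟩ := eventually_atTop.mp hω
  set C : ℝ := ∑ ℓ ∈ Finset.range N, ‖g ℓ ω‖ with hC
  have hC0 : 0 ≤ C := Finset.sum_nonneg fun i _ => norm_nonneg _
  have hCb : ∀ ℓ < N, ‖g ℓ ω‖ ≤ C := by
    intro ℓ hℓ
    exact Finset.single_le_sum (f := fun i => ‖g i ω‖) (fun i _ => norm_nonneg _)
      (Finset.mem_range.mpr hℓ)
  have hbound : ∀ n : ℕ, ∀ ℓ ≤ n, ‖g ℓ ω‖ ≤ C + 2 * Real.sqrt (Real.log n) := by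
    intro n ℓ hℓn
    by_cases hℓ : ℓ < N
    · have h1 : 0 ≤ 2 * Real.sqrt (Real.log n) := by positivity
      linarith [hCb ℓ hℓ]
    · have h1 := hN ℓ (le_of_not_gt hℓ)
      have hlog : Real.log ℓ ≤ Real.log n := by
        rcases Nat.eq_zero_or_pos ℓ with h0 | hpos
        · subst h0
          simpa using Real.log_natCast_nonneg n
        · exact Real.log_le_log (by exact_mod_cast hpos) (by exact_mod_cast hℓn)
      have h2 := Real.sqrt_le_sqrt hlog
      linarith
  -- convergence of the deterministic bound
  have hd0 : ∀ n : ℕ, 0 ≤ ‖T n - Tlim‖ + ‖v n - vlim‖ := fun n => by positivity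
  have hdlim : Tendsto (fun n : ℕ => ‖T n - Tlim‖ + ‖v n - vlim‖) atTop (nhds 0) := by
    refine tendsto_of_tendsto_of_tendsto_of_le_of_le' tendsto_const_nhds hconv
      (Filter.Eventually.of_forall hd0) ?_
    filter_upwards [eventually_ge_atTop 3] with n hn
    have hlog1 : (1:ℝ) ≤ Real.log n := by
      rw [show (1:ℝ) = Real.log (Real.exp 1) by simp]
      apply Real.log_le_log (Real.exp_pos 1)
      have he : Real.exp 1 ≤ 3 := by
        have := Real.exp_one_lt_d9
        linarith
      have h3n : (3:ℝ) ≤ n := by exact_mod_cast hn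
      linarith
    have hsq1 : (1:ℝ) ≤ Real.sqrt (Real.log n) := by
      rw [show (1:ℝ) = Real.sqrt 1 by simp]
      exact Real.sqrt_le_sqrt hlog1
    nlinarith [hd0 n]
  have hDlim : Tendsto
      (fun n : ℕ => (C + 1 + 2 * Real.sqrt (Real.log n)) * (‖T n - Tlim‖ + ‖v n - vlim‖))
      atTop (nhds 0) := by
    have h1 : Tendsto (fun n : ℕ => (C + 1) * (‖T n - Tlim‖ + ‖v n - vlim‖))
        atTop (nhds 0) := by
      simpa using hdlim.const_mul (C + 1)
    have h2 : Tendsto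
        (fun n : ℕ => 2 * (Real.sqrt (Real.log n) * (‖T n - Tlim‖ + ‖v n - vlim‖)))
        atTop (nhds 0) := by
      simpa using hconv.const_mul 2
    have h3 := h1.add h2
    rw [add_zero] at h3
    refine h3.congr fun n => ?_
    ring
  rw [Metric.tendsto_atTop]
  intro ε hε
  obtain ⟨δ, hδ, hδε⟩ := Metric.uniformContinuous_iff.mp hh ε hε
  obtain ⟨N₁, hN₁⟩ := Metric.tendsto_atTop.mp hDlim δ hδ
  refine ⟨N₁, fun n hn => ?_⟩
  have hDn : (C + 1 + 2 * Real.sqrt (Real.log n)) * (‖T n - Tlim‖ + ‖v n - vlim‖) < δ := by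
    have := hN₁ n hn
    rw [Real.dist_eq, sub_zero] at this
    exact lt_of_le_of_lt (le_abs_self _) this
  have hFlt : Finset.sup' (Finset.range (n + 1)) Finset.nonempty_range_add_one
      (fun ℓ => infDist (h (T n (g ℓ ω) + v n)) (measSupport ρ)) < ε := by
    rw [Finset.sup'_lt_iff]
    intro ℓ hℓ
    have hℓn : ℓ ≤ n := Nat.lt_succ_iff.mp (Finset.mem_range.mp hℓ)
    have hdom : dist (T n (g ℓ ω) + v n) (Tlim (g ℓ ω) + vlim) < δ := by
      have h1 : dist (T n (g ℓ ω) + v n) (Tlim (g ℓ ω) + vlim)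
          ≤ ‖T n - Tlim‖ * ‖g ℓ ω‖ + ‖v n - vlim‖ := by
        rw [dist_eq_norm]
        have heq : (T n (g ℓ ω) + v n) - (Tlim (g ℓ ω) + vlim)
            = (T n - Tlim) (g ℓ ω) + (v n - vlim) := by
          simp only [ContinuousLinearMap.sub_apply]
          abel
        rw [heq]
        refine le_trans (norm_add_le _ _) ?_
        exact add_le_add_left (ContinuousLinearMap.le_opNorm _ _) _
      have h2 : ‖T n - Tlim‖ * ‖g ℓ ω‖ + ‖v n - vlim‖
          ≤ (C + 1 + 2 * Real.sqrt (Real.log n)) * (‖T n - Tlim‖ + ‖v n - vlim‖) := by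
        have hb := hbound n ℓ hℓn
        have hT0 : (0:ℝ) ≤ ‖T n - Tlim‖ := norm_nonneg _
        have hv0 : (0:ℝ) ≤ ‖v n - vlim‖ := norm_nonneg _
        have hsq0 : (0:ℝ) ≤ Real.sqrt (Real.log n) := Real.sqrt_nonneg _
        have hg0 : (0:ℝ) ≤ ‖g ℓ ω‖ := norm_nonneg _
        nlinarith
      linarith
    exact lt_of_le_of_lt (infDist_le_dist_of_mem (hSmem (g ℓ ω))) (hδε hdom)
  have hF0 : 0 ≤ Finset.sup' (Finset.range (n + 1)) Finset.nonempty_range_add_one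
      (fun ℓ => infDist (h (T n (g ℓ ω) + v n)) (measSupport ρ)) :=
    le_trans infDist_nonneg (Finset.le_sup'
      (fun ℓ => infDist (h (T n (g ℓ ω) + v n)) (measSupport ρ))
      (Finset.mem_range.mpr (Nat.succ_pos n)))
  rw [Real.dist_eq, sub_zero, abs_of_nonneg hF0]
  exact hFlt
end

section
/- Let μ be a probability measure on ℝ with compact support, let λ, φ > 0, δ > 0, let U ⊆ ℂ be open, and let S : U → ℂ be holomorphic with |λφ + S(z) f| ≥ δ for all z ∈ U and all f ∈ supp(μ). Suppose that for every z ∈ U the effective bulk equation 1 + z S(z) = φ ∫ S(z) f/(λφ + S(z) f) dμ(f) holds. Then for every z ∈ U with S′(z) ≠ 0, one has z + S(z)/S′(z) = λ φ² ∫ f/(λφ + S(z) f)² dμ(f). -/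
open MeasureTheory Complex

/-- Differentiating the effective bulk equation: if `S` is holomorphic on an open `U`,
`|λφ + S(z)f| ≥ δ` on the support of `μ`, and `1 + z S(z) = φ ∫ S(z)f/(λφ + S(z)f) dμ(f)`
on `U`, then wherever `S'(z) ≠ 0`,
`z + S(z)/S'(z) = λ φ² ∫ f/(λφ + S(z)f)² dμ(f)`. -/
theorem effective_bulk_derivative_identity
    (μ : Measure ℝ) [IsProbabilityMeasure μ]
    (hcpt : IsCompact (measSupport μ))
    (lam φ δ : ℝ) (hlam : 0 < lam) (hφ : 0 < φ) (hδ : 0 < δ)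
    (U : Set ℂ) (hU : IsOpen U) (S : ℂ → ℂ)
    (hS : DifferentiableOn ℂ S U)
    (hδS : ∀ z ∈ U, ∀ f ∈ measSupport μ, δ ≤ ‖(lam : ℂ) * (φ : ℂ) + S z * f‖)
    (heq : ∀ z ∈ U, 1 + z * S z
      = (φ : ℂ) * ∫ f : ℝ, S z * f / ((lam : ℂ) * (φ : ℂ) + S z * f) ∂μ) :
    ∀ z ∈ U, deriv S z ≠ 0 →
      z + S z / deriv S z
        = (lam : ℂ) * (φ : ℂ) ^ 2
            * ∫ f : ℝ, (f : ℂ) / ((lam : ℂ) * (φ : ℂ) + S z * f) ^ 2 ∂μ := by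
  intro z hz hS'
  classical
  -- a.e. membership in the support
  have hKnull : μ (measSupport μ)ᶜ = 0 := by
    obtain ⟨T, hTc, hTsub, hTU⟩ :=
      TopologicalSpace.isOpen_sUnion_countable {V : Set ℝ | IsOpen V ∧ μ V = 0}
        (fun V hV => hV.1)
    refine measure_mono_null (fun x hx => ?_) ((measure_sUnion_null_iff hTc).2
      fun s hs => (hTsub hs).2)
    rw [hTU]
    simp only [measSupport, Set.mem_compl_iff, Set.mem_setOf_eq, not_forall] at hx
    obtain ⟨V, hVo, hxV, hV0⟩ := hx
    exact ⟨V, ⟨hVo, not_not.mp hV0⟩, hxV⟩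
  have hae : ∀ᵐ f ∂μ, f ∈ measSupport μ := by
    rw [ae_iff]; exact hKnull
  -- bound on the support
  obtain ⟨M, hM⟩ := hcpt.exists_bound_of_continuousOn continuousOn_id
  set M' : ℝ := max M 0 with hM'def
  have hM' : ∀ f ∈ measSupport μ, |f| ≤ M' := fun f hf =>
    le_trans (by simpa [Real.norm_eq_abs] using hM f hf) (le_max_left _ _)
  have hM'0 : 0 ≤ M' := le_max_right _ _
  -- radius with ball inside U
  obtain ⟨r, hr0, hrU⟩ := Metric.isOpen_iff.1 hU z hz
  have hballU : Metric.ball z (r / 2) ⊆ U :=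
    (Metric.ball_subset_ball (by linarith)).trans hrU
  have hcbU : Metric.closedBall z (r / 2) ⊆ U :=
    (Metric.closedBall_subset_ball (by linarith)).trans hrU
  -- bound on deriv S near z
  have hderivCont : ContinuousOn (deriv S) U := (hS.analyticOnNhd hU).deriv.continuousOn
  obtain ⟨C, hC⟩ := (isCompact_closedBall z (r / 2)).exists_bound_of_continuousOn
    (hderivCont.mono hcbU)
  set C' : ℝ := max C 0 with hC'def
  have hC' : ∀ x ∈ Metric.ball z (r / 2), ‖deriv S x‖ ≤ C' := fun x hx =>
    (hC x (Metric.ball_subset_closedBall hx)).trans (le_max_left _ _)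
  have hC'0 : 0 ≤ C' := le_max_right _ _
  set c : ℂ := (lam : ℂ) * (φ : ℂ) with hc
  -- measurability
  have hmeas : ∀ x : ℂ, AEStronglyMeasurable (fun f : ℝ => (c + S x * (f : ℂ))⁻¹) μ := by
    intro x
    exact ((measurable_const.add (Complex.measurable_ofReal.const_mul (S x))).inv).aestronglyMeasurable
  have hne : ∀ w ∈ U, ∀ f ∈ measSupport μ, c + S w * (f : ℂ) ≠ 0 := by
    intro w hw f hf h0
    have := hδS w hw f hf
    rw [hc] at h0
    rw [h0] at this
    simp at this
    linarith
  -- integrability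
  have hint : ∀ w ∈ U, Integrable (fun f : ℝ => (c + S w * (f : ℂ))⁻¹) μ := by
    intro w hw
    refine (integrable_const (δ⁻¹)).mono' (hmeas w) ?_
    filter_upwards [hae] with f hf
    rw [norm_inv]
    exact inv_anti₀ hδ (hδS w hw f hf)
  -- the rewritten bulk equation
  set g : ℂ → ℂ := fun w => ∫ f : ℝ, (c + S w * (f : ℂ))⁻¹ ∂μ with hg
  have key : ∀ w ∈ U, (1 : ℂ) + w * S w = (φ : ℂ) - (lam : ℂ) * (φ : ℂ) ^ 2 * g w := by
    intro w hw
    have h1 : (∫ f : ℝ, S w * (f : ℂ) / (c + S w * (f : ℂ)) ∂μ)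
        = ∫ f : ℝ, (1 - c * (c + S w * (f : ℂ))⁻¹) ∂μ := by
      refine integral_congr_ae ?_
      filter_upwards [hae] with f hf
      have h0 := hne w hw f hf
      field_simp
      ring
    have h2 : (∫ f : ℝ, (1 - c * (c + S w * (f : ℂ))⁻¹) ∂μ) = 1 - c * g w := by
      rw [integral_sub (integrable_const 1) ((hint w hw).const_mul c),
        integral_const, integral_const_mul]
      simp [hg]
    rw [heq w hw, h1, h2, hc]
    ring
  -- differentiating g under the integral sign
  have hSx : ∀ x ∈ Metric.ball z (r / 2), HasDerivAt S (deriv S x) x := fun x hx =>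
    (hS.differentiableAt (hU.mem_nhds (hballU hx))).hasDerivAt
  have hF'meas : AEStronglyMeasurable
      (fun f : ℝ => -(deriv S z * (f : ℂ)) / (c + S z * (f : ℂ)) ^ 2) μ := by
    refine Measurable.aestronglyMeasurable ?_
    exact ((Complex.measurable_ofReal.const_mul (deriv S z)).neg).div
      ((measurable_const.add (Complex.measurable_ofReal.const_mul (S z))).pow_const 2)
  have hbound : ∀ᵐ f : ℝ ∂μ, ∀ x ∈ Metric.ball z (r / 2),
      ‖-(deriv S x * (f : ℂ)) / (c + S x * (f : ℂ)) ^ 2‖ ≤ C' * M' / δ ^ 2 := by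
    filter_upwards [hae] with f hf
    intro x hx
    rw [norm_div, norm_neg, norm_mul, norm_pow]
    have hd2 : δ ^ 2 ≤ ‖c + S x * (f : ℂ)‖ ^ 2 :=
      pow_le_pow_left₀ hδ.le (hδS x (hballU hx) f hf) 2
    have hnum : ‖deriv S x‖ * ‖(f : ℂ)‖ ≤ C' * M' := by
      have h1 : ‖(f : ℂ)‖ ≤ M' := by
        rw [Complex.norm_real, Real.norm_eq_abs]; exact hM' f hf
      exact mul_le_mul (hC' x hx) h1 (norm_nonneg _) hC'0
    exact div_le_div₀ (mul_nonneg hC'0 hM'0) hnum (pow_pos hδ 2) hd2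
  have hdiff : ∀ᵐ f : ℝ ∂μ, ∀ x ∈ Metric.ball z (r / 2),
      HasDerivAt (fun y => (c + S y * (f : ℂ))⁻¹)
        (-(deriv S x * (f : ℂ)) / (c + S x * (f : ℂ)) ^ 2) x := by
    filter_upwards [hae] with f hf
    intro x hx
    have h1 : HasDerivAt (fun y => c + S y * (f : ℂ)) (deriv S x * (f : ℂ)) x :=
      ((hSx x hx).mul_const ((f : ℂ))).const_add c
    exact h1.inv (hne x (hballU hx) f hf)
  have hG := (hasDerivAt_integral_of_dominated_loc_of_deriv_le
    (F := fun x (f : ℝ) => (c + S x * (f : ℂ))⁻¹)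
    (F' := fun x (f : ℝ) => -(deriv S x * (f : ℂ)) / (c + S x * (f : ℂ)) ^ 2)
    (bound := fun _ : ℝ => C' * M' / δ ^ 2) (Metric.ball_mem_nhds z (half_pos hr0))
    (Filter.Eventually.of_forall hmeas) (hint z hz) hF'meas hbound
    (integrable_const _) hdiff).2
  -- identify the derivative from the identity on U
  have hL : HasDerivAt (fun w => (1 : ℂ) + w * S w) (S z + z * deriv S z) z := by
    have h1 := (hasDerivAt_id z).mul (hS.differentiableAt (hU.mem_nhds hz)).hasDerivAt
    simpa using h1.const_add 1
  have hR : HasDerivAt (fun w => (φ : ℂ) - (lam : ℂ) * (φ : ℂ) ^ 2 * g w)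
      (-((lam : ℂ) * (φ : ℂ) ^ 2 * ∫ f : ℝ,
        -(deriv S z * (f : ℂ)) / (c + S z * (f : ℂ)) ^ 2 ∂μ)) z :=
    (hG.const_mul _).const_sub _
  have heqev : (fun w => (1 : ℂ) + w * S w)
      =ᶠ[nhds z] (fun w => (φ : ℂ) - (lam : ℂ) * (φ : ℂ) ^ 2 * g w) := by
    filter_upwards [hU.mem_nhds hz] with w hw
    exact key w hw
  have hL' : HasDerivAt (fun w => (φ : ℂ) - (lam : ℂ) * (φ : ℂ) ^ 2 * g w)
      (S z + z * deriv S z) z := hL.congr_of_eventuallyEq heqev.symm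
  have huniq := hL'.unique hR
  -- pull the constant out of the integral
  have hD : (∫ f : ℝ, -(deriv S z * (f : ℂ)) / (c + S z * (f : ℂ)) ^ 2 ∂μ)
      = -(deriv S z) * ∫ f : ℝ, (f : ℂ) / (c + S z * (f : ℂ)) ^ 2 ∂μ := by
    rw [← integral_const_mul]
    refine integral_congr_ae (Filter.Eventually.of_forall fun f => ?_)
    ring
  rw [hD] at huniq
  -- conclude
  have hfin : S z + z * deriv S z
      = (lam : ℂ) * (φ : ℂ) ^ 2 * deriv S z
          * ∫ f : ℝ, (f : ℂ) / (c + S z * (f : ℂ)) ^ 2 ∂μ := by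
    rw [huniq]; ring
  rw [hc] at hfin
  field_simp
  linear_combination hfin
end
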